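/- Let p̂ ∈ Δ^k have full support, let v ∈ ℝ^k, and let θ > 0. Then the infimum over p ∈ Δ^k satisfying KL(p‖p̂) ≤ θ of Σ_i p_i v_i equals the supremum over λ ≥ 0 of g(λ), where g(λ) = −λθ − λ·log( Σ_i p̂_i·exp(−v_i/λ) ) for λ > 0 and g(0) = min_i v_i. -/

import Mathlib

open Real Finset Filter Topology

lemma gibbs_nonneg {k : ℕ} (p q : Fin k → ℝ) (hp : ∀ i, 0 ≤ p i) (hq : ∀ i, 0 < q i)
    (hpsum : ∑ i, p i = 1) (hqsum : ∑ i, q i ≤ 1) :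
    0 ≤ ∑ i, p i * Real.log (p i / q i) := by
  have key : ∀ i, p i * Real.log (q i / p i) ≤ q i - p i := by
    intro i
    rcases eq_or_lt_of_le (hp i) with h | h
    · simp [← h, (hq i).le]
    · have h1 : 0 < q i / p i := div_pos (hq i) h
      calc p i * Real.log (q i / p i) ≤ p i * (q i / p i - 1) :=
            mul_le_mul_of_nonneg_left (Real.log_le_sub_one_of_pos h1) h.le
        _ = q i - p i := by field_simp
  have hsum : ∑ i, p i * Real.log (q i / p i) ≤ 0 := by
    calc ∑ i, p i * Real.log (q i / p i) ≤ ∑ i, (q i - p i) :=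
          Finset.sum_le_sum (fun i _ => key i)
      _ = (∑ i, q i) - 1 := by rw [Finset.sum_sub_distrib, hpsum]
      _ ≤ 0 := by linarith
  have heq : ∀ i, p i * Real.log (p i / q i) = -(p i * Real.log (q i / p i)) := by
    intro i
    rw [show p i / q i = (q i / p i)⁻¹ by rw [inv_div], Real.log_inv]
    ring
  rw [Finset.sum_congr rfl (fun i _ => heq i)]
  simp only [Finset.sum_neg_distrib]
  linarith

lemma weak_pos {k : ℕ} (hk : 0 < k) (phat v : Fin k → ℝ) (hpos : ∀ i, 0 < phat i)
    (hpsum : ∑ i, phat i = 1)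
    (θ : ℝ) (lam : ℝ) (hlam : 0 < lam)
    (p : Fin k → ℝ) (hp : ∀ i, 0 ≤ p i) (hps : ∑ i, p i = 1)
    (hKL : ∑ i, p i * Real.log (p i / phat i) ≤ θ) :
    -lam * θ - lam * Real.log (∑ i, phat i * Real.exp (-v i / lam)) ≤ ∑ i, p i * v i := by
  haveI : Nonempty (Fin k) := ⟨⟨0, hk⟩⟩
  set Z : ℝ := ∑ i, phat i * Real.exp (-v i / lam) with hZdef
  have hZ : 0 < Z := Finset.sum_pos (fun i _ => mul_pos (hpos i) (Real.exp_pos _))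
    Finset.univ_nonempty
  set q : Fin k → ℝ := fun i => phat i * Real.exp (-v i / lam) / Z with hqdef
  have hq : ∀ i, 0 < q i := fun i => div_pos (mul_pos (hpos i) (Real.exp_pos _)) hZ
  have hqs : ∑ i, q i = 1 := by
    rw [hqdef]
    rw [← Finset.sum_div, ← hZdef, div_self hZ.ne']
  have key : ∀ i, p i * Real.log (p i / q i)
      = p i * Real.log (p i / phat i) + p i * (v i / lam) + p i * Real.log Z := by
    intro i
    rcases eq_or_lt_of_le (hp i) with h | h
    · simp [← h]
    · have hqi : q i = phat i * Real.exp (-v i / lam) / Z := rfl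
      have hlog : Real.log (p i / q i)
          = Real.log (p i / phat i) + v i / lam + Real.log Z := by
        rw [Real.log_div h.ne' (hq i).ne', hqi,
          Real.log_div (mul_pos (hpos i) (Real.exp_pos _)).ne' hZ.ne',
          Real.log_mul (hpos i).ne' (Real.exp_ne_zero _), Real.log_exp,
          Real.log_div h.ne' (hpos i).ne']
        ring
      rw [hlog]; ring
  have hgibbs := gibbs_nonneg p q hp hq hps hqs.le
  rw [Finset.sum_congr rfl (fun i _ => key i)] at hgibbs
  rw [Finset.sum_add_distrib, Finset.sum_add_distrib, ← Finset.sum_mul, hps] at hgibbs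
  have hconv : ∑ i, p i * (v i / lam) = (∑ i, p i * v i) / lam := by
    rw [Finset.sum_div]; exact Finset.sum_congr rfl (fun i _ => by ring)
  rw [hconv] at hgibbs
  have h2 : 0 ≤ θ + (∑ i, p i * v i) / lam + Real.log Z := by nlinarith [hgibbs]
  have h3 := mul_le_mul_of_nonneg_left h2 hlam.le
  have h4 : lam * ((∑ i, p i * v i) / lam) = ∑ i, p i * v i := by
    field_simp
  nlinarith [h3]

lemma exists_gibbs {k : ℕ} (hk : 0 < k) (phat v : Fin k → ℝ) (hpos : ∀ i, 0 < phat i)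
    (hpsum : ∑ i, phat i = 1) (m : ℝ) (hm : ∀ i, m ≤ v i)
    (hs : 0 < ∑ i ∈ Finset.univ.filter (fun i => v i = m), phat i)
    (θ : ℝ) (hθ : 0 < θ)
    (hcase : θ < -Real.log (∑ i ∈ Finset.univ.filter (fun i => v i = m), phat i)) :
    ∃ lam : ℝ, 0 < lam ∧ ∃ p : Fin k → ℝ, (∀ i, 0 ≤ p i) ∧ (∑ i, p i = 1) ∧
      (∑ i, p i * Real.log (p i / phat i)) ≤ θ ∧
      ∑ i, p i * v i
        = -lam * θ - lam * Real.log (∑ i, phat i * Real.exp (-v i / lam)) := by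
  haveI : Nonempty (Fin k) := ⟨⟨0, hk⟩⟩
  set s := ∑ i ∈ Finset.univ.filter (fun i => v i = m), phat i with hsdef
  set W : ℝ → ℝ := fun β => ∑ i, phat i * Real.exp (-β * (v i - m)) with hWdef
  have hWpos : ∀ β, 0 < W β := fun β =>
    Finset.sum_pos (fun i _ => mul_pos (hpos i) (Real.exp_pos _)) Finset.univ_nonempty
  have hWcont : Continuous W := continuous_finset_sum _ (fun i _ =>
    continuous_const.mul (Real.continuous_exp.comp (by continuity)))
  set q : ℝ → Fin k → ℝ := fun β i => phat i * Real.exp (-β * (v i - m)) / W β with hqdef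
  have hqpos : ∀ β i, 0 < q β i := fun β i =>
    div_pos (mul_pos (hpos i) (Real.exp_pos _)) (hWpos β)
  have hqsum : ∀ β, ∑ i, q β i = 1 := by
    intro β
    simp only [hqdef]
    rw [← Finset.sum_div, div_self (hWpos β).ne']
  have hqcont : ∀ i, Continuous (fun β => q β i) := fun i =>
    (continuous_const.mul (Real.continuous_exp.comp (by continuity))).div hWcont
      (fun β => (hWpos β).ne')
  set h : ℝ → ℝ := fun β => ∑ i, (q β i * Real.log (q β i) - q β i * Real.log (phat i))
    with hhdef
  have hcont : Continuous h := continuous_finset_sum _ (fun i _ =>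
    (Real.continuous_mul_log.comp (hqcont i)).sub ((hqcont i).mul continuous_const))
  have hh_kl : ∀ β, ∑ i, q β i * Real.log (q β i / phat i) = h β := by
    intro β
    simp only [hhdef]
    refine Finset.sum_congr rfl (fun i _ => ?_)
    rw [Real.log_div (hqpos β i).ne' (hpos i).ne']
    ring
  have hW0 : W 0 = 1 := by
    simp only [hWdef, neg_zero, zero_mul, Real.exp_zero, mul_one]
    exact hpsum
  have hq0 : ∀ i, q 0 i = phat i := by
    intro i
    simp only [hqdef, hW0, neg_zero, zero_mul, Real.exp_zero, mul_one, div_one]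
  have hh0 : h 0 = 0 := by
    simp only [hhdef, hq0, sub_self, Finset.sum_const_zero]
  -- limits
  have hlim_exp : ∀ i, v i ≠ m → Tendsto (fun β => Real.exp (-β * (v i - m))) atTop (𝓝 0) := by
    intro i hne
    have hd : 0 < v i - m := sub_pos.mpr (lt_of_le_of_ne (hm i) (Ne.symm hne))
    have h1 : Tendsto (fun β : ℝ => β * (v i - m)) atTop atTop :=
      Filter.tendsto_id.atTop_mul_const hd
    have h2 : Tendsto (fun β : ℝ => -β * (v i - m)) atTop atBot := by
      simpa only [Function.comp_def, neg_mul] using tendsto_neg_atTop_atBot.comp h1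
    exact Real.tendsto_exp_atBot.comp h2
  have hnum_lim : ∀ i, Tendsto (fun β => phat i * Real.exp (-β * (v i - m))) atTop
      (𝓝 (if v i = m then phat i else 0)) := by
    intro i
    by_cases hvi : v i = m
    · simpa [hvi] using (tendsto_const_nhds : Tendsto (fun _ : ℝ => phat i) atTop _)
    · simpa [hvi] using (hlim_exp i hvi).const_mul (phat i)
  have hW_lim : Tendsto W atTop (𝓝 s) := by
    have : Tendsto W atTop (𝓝 (∑ i, if v i = m then phat i else 0)) := by
      simp only [hWdef]
      exact tendsto_finset_sum _ (fun i _ => hnum_lim i)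
    rwa [← Finset.sum_filter] at this
  have hq_lim : ∀ i, Tendsto (fun β => q β i) atTop
      (𝓝 ((if v i = m then phat i else 0) / s)) := by
    intro i
    exact (hnum_lim i).div hW_lim hs.ne'
  set ql : Fin k → ℝ := fun i => (if v i = m then phat i else 0) / s with hqldef
  have hterm_lim : ∀ i, Tendsto
      (fun β => q β i * Real.log (q β i) - q β i * Real.log (phat i)) atTop
      (𝓝 (ql i * Real.log (ql i) - ql i * Real.log (phat i))) := by
    intro i
    exact ((Real.continuous_mul_log.tendsto _).comp (hq_lim i)).sub
      ((hq_lim i).mul_const _)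
  have hT : ∑ i, (ql i * Real.log (ql i) - ql i * Real.log (phat i)) = -Real.log s := by
    have key : ∀ i, ql i * Real.log (ql i) - ql i * Real.log (phat i)
        = if v i = m then -(phat i / s) * Real.log s else 0 := by
      intro i
      by_cases hvi : v i = m
      · simp only [hqldef, if_pos hvi]
        rw [Real.log_div (hpos i).ne' hs.ne']
        ring
      · simp [hqldef, hvi]
    rw [Finset.sum_congr rfl (fun i _ => key i), ← Finset.sum_filter]
    rw [← Finset.sum_mul]
    have : ∑ i ∈ Finset.univ.filter (fun i => v i = m), -(phat i / s) = -1 := by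
      rw [Finset.sum_neg_distrib, ← Finset.sum_div, ← hsdef, div_self hs.ne']
    rw [this]; ring
  have hh_lim : Tendsto h atTop (𝓝 (-Real.log s)) := by
    rw [← hT]
    simp only [hhdef]
    exact tendsto_finset_sum _ (fun i _ => hterm_lim i)
  -- find β₀ with h β₀ > θ
  have hev : ∀ᶠ β in atTop, θ < h β := hh_lim.eventually (eventually_gt_nhds hcase)
  obtain ⟨β₀, hβ₀θ, hβ₀0⟩ := (hev.and (eventually_ge_atTop (0:ℝ))).exists
  -- IVT
  have hIcc := intermediate_value_Icc hβ₀0 hcont.continuousOn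
  have hθmem : θ ∈ Set.Icc (h 0) (h β₀) := ⟨by rw [hh0]; exact hθ.le, hβ₀θ.le⟩
  obtain ⟨β, hβmem, hβeq⟩ := hIcc hθmem
  have hβpos : 0 < β := by
    rcases hβmem.1.lt_or_eq with hlt | heq
    · exact hlt
    · exfalso; rw [← heq, hh0] at hβeq; linarith
  refine ⟨β⁻¹, inv_pos.mpr hβpos, q β, fun i => (hqpos β i).le, hqsum β, ?_, ?_⟩
  · rw [hh_kl β, hβeq]
  · have hlogq : ∀ i, Real.log (q β i)
        = Real.log (phat i) + (-β * (v i - m)) - Real.log (W β) := by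
      intro i
      simp only [hqdef]
      rw [Real.log_div (mul_pos (hpos i) (Real.exp_pos _)).ne' (hWpos β).ne',
        Real.log_mul (hpos i).ne' (Real.exp_ne_zero _), Real.log_exp]
    have hhβ : h β = -β * ((∑ i, q β i * v i) - m) - Real.log (W β) := by
      simp only [hhdef]
      have e0 : ∀ i, q β i * Real.log (q β i) - q β i * Real.log (phat i)
          = (-β) * (q β i * v i) - ((-β) * m) * q β i - Real.log (W β) * q β i := by
        intro i; rw [hlogq i]; ring
      rw [Finset.sum_congr rfl (fun i _ => e0 i)]
      rw [Finset.sum_sub_distrib, Finset.sum_sub_distrib, ← Finset.mul_sum,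
        ← Finset.mul_sum, ← Finset.mul_sum, hqsum β]
      ring
    have hZ : (∑ i, phat i * Real.exp (-v i / β⁻¹)) = Real.exp (-β * m) * W β := by
      simp only [hWdef, Finset.mul_sum]
      refine Finset.sum_congr rfl (fun i _ => ?_)
      have : -v i / β⁻¹ = (-β * m) + (-β * (v i - m)) := by
        field_simp; ring
      rw [this, Real.exp_add]; ring
    rw [hZ, Real.log_mul (Real.exp_ne_zero _) (hWpos β).ne', Real.log_exp, ← hβeq, hhβ]
    field_simp
    ring

/-- **Strong Lagrangian duality for the KL-constrained robust Bellman update.**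
For a full-support nominal `p̂ ∈ Δ^k`, values `v ∈ ℝ^k` and radius `θ > 0`,
`inf { ⟨p, v⟩ : p ∈ Δ^k, KL(p‖p̂) ≤ θ } = sup_{λ ≥ 0} g(λ)`, where
`g(λ) = −λθ − λ·log Σ_i p̂_i exp(−v_i/λ)` for `λ > 0` and `g(0) = min_i v_i`. -/
theorem kl_robust_duality
    (k : ℕ) (hk : 0 < k) (phat v : Fin k → ℝ)
    (hphat : phat ∈ stdSimplex ℝ (Fin k)) (hpos : ∀ i, 0 < phat i)
    (θ : ℝ) (hθ : 0 < θ) :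
    let KL : (Fin k → ℝ) → ℝ := fun p => ∑ i, p i * Real.log (p i / phat i)
    let g : ℝ → ℝ := fun lam =>
      if lam = 0 then
        Finset.univ.inf' (Finset.univ_nonempty_iff.mpr ⟨⟨0, hk⟩⟩) v
      else
        -lam * θ - lam * Real.log (∑ i, phat i * Real.exp (-v i / lam))
    sInf {x : ℝ | ∃ p ∈ stdSimplex ℝ (Fin k), KL p ≤ θ ∧ x = ∑ i, p i * v i}
      = sSup {y : ℝ | ∃ lam : ℝ, 0 ≤ lam ∧ y = g lam} := by
  haveI : Nonempty (Fin k) := ⟨⟨0, hk⟩⟩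
  intro KL g
  obtain ⟨hp0, hp1⟩ := hphat
  set P := {x : ℝ | ∃ p ∈ stdSimplex ℝ (Fin k), KL p ≤ θ ∧ x = ∑ i, p i * v i} with hPdef
  set D := {y : ℝ | ∃ lam : ℝ, 0 ≤ lam ∧ y = g lam} with hDdef
  set m := Finset.univ.inf' (Finset.univ_nonempty_iff.mpr ⟨⟨0, hk⟩⟩) v with hmdef
  have hm_le : ∀ i, m ≤ v i := fun i => Finset.inf'_le v (Finset.mem_univ i)
  have hg0 : g 0 = m := by simp [g, hmdef]
  set s := ∑ i ∈ Finset.univ.filter (fun i => v i = m), phat i with hsdef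
  have hA : ∃ i0, i0 ∈ Finset.univ.filter (fun i => v i = m) := by
    obtain ⟨i0, -, hi0⟩ := Finset.exists_mem_eq_inf' (Finset.univ_nonempty_iff.mpr ⟨⟨0, hk⟩⟩) v
    exact ⟨i0, Finset.mem_filter.mpr ⟨Finset.mem_univ _, hi0.symm⟩⟩
  have hs : 0 < s :=
    Finset.sum_pos (fun i _ => hpos i) hA
  -- KL phat = 0
  have hKLphat : KL phat = 0 := by
    show (∑ i, phat i * Real.log (phat i / phat i)) = 0
    have : ∀ i, phat i * Real.log (phat i / phat i) = 0 := by
      intro i; rw [div_self (hpos i).ne', Real.log_one, mul_zero]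
    rw [Finset.sum_congr rfl (fun i _ => this i), Finset.sum_const_zero]
  have hPmem : (∑ i, phat i * v i) ∈ P := ⟨phat, ⟨hp0, hp1⟩, by rw [hKLphat]; exact hθ.le, rfl⟩
  have hPne : P.Nonempty := ⟨_, hPmem⟩
  have hDne : D.Nonempty := ⟨g 0, 0, le_refl 0, rfl⟩
  -- weak duality
  have weak : ∀ x ∈ P, ∀ y ∈ D, y ≤ x := by
    rintro x ⟨p, ⟨hpnn, hpsum1⟩, hKLp, rfl⟩ y ⟨lam, hlam0, rfl⟩
    rcases eq_or_lt_of_le hlam0 with h0 | hlamp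
    · rw [← h0, hg0]
      calc m = ∑ i, p i * m := by rw [← Finset.sum_mul, hpsum1, one_mul]
        _ ≤ ∑ i, p i * v i := Finset.sum_le_sum (fun i _ =>
            mul_le_mul_of_nonneg_left (hm_le i) (hpnn i))
    · have : g lam = -lam * θ - lam * Real.log (∑ i, phat i * Real.exp (-v i / lam)) := by
        simp [g, hlamp.ne']
      rw [this]
      exact weak_pos hk phat v hpos hp1 θ lam hlamp p hpnn hpsum1 hKLp
  have hbddP : BddBelow P := ⟨g 0, fun x hx => weak x hx (g 0) ⟨0, le_refl 0, rfl⟩⟩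
  have hbddD : BddAbove D := ⟨∑ i, phat i * v i, fun y hy => weak _ hPmem y hy⟩
  apply le_antisymm
  · by_cases hcase : -Real.log s ≤ θ
    · -- put mass on argmin set
      set p : Fin k → ℝ := fun i => if v i = m then phat i / s else 0 with hpdef
      have hpnn : ∀ i, 0 ≤ p i := by
        intro i; by_cases hvi : v i = m <;> simp [hpdef, hvi, le_of_lt (div_pos (hpos i) hs)]
      have hpsum1 : ∑ i, p i = 1 := by
        simp only [hpdef]
        rw [← Finset.sum_filter, ← Finset.sum_div, ← hsdef, div_self hs.ne']
      have hKLp : KL p ≤ θ := by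
        show (∑ i, p i * Real.log (p i / phat i)) ≤ θ
        have key : ∀ i, p i * Real.log (p i / phat i)
            = if v i = m then (phat i / s) * (-Real.log s) else 0 := by
          intro i
          by_cases hvi : v i = m
          · simp only [hpdef, if_pos hvi]
            have he : phat i / s / phat i = s⁻¹ := by
              field_simp
              rw [div_self (hpos i).ne']
            rw [he, Real.log_inv]
          · simp [hpdef, hvi]
        rw [Finset.sum_congr rfl (fun i _ => key i), ← Finset.sum_filter, ← Finset.sum_mul,
          ← Finset.sum_div, ← hsdef, div_self hs.ne', one_mul]
        linarith
      have hpv : ∑ i, p i * v i = m := by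
        have key : ∀ i, p i * v i = if v i = m then phat i / s * m else 0 := by
          intro i
          by_cases hvi : v i = m
          · simp [hpdef, hvi]
          · simp [hpdef, hvi]
        rw [Finset.sum_congr rfl (fun i _ => key i), ← Finset.sum_filter, ← Finset.sum_mul,
          ← Finset.sum_div, ← hsdef, div_self hs.ne', one_mul]
      calc sInf P ≤ m := by
            refine csInf_le hbddP ?_
            exact ⟨p, ⟨hpnn, hpsum1⟩, hKLp, hpv.symm⟩
        _ = g 0 := hg0.symm
        _ ≤ sSup D := le_csSup hbddD ⟨0, le_refl 0, rfl⟩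
    · push_neg at hcase
      obtain ⟨lam, hlam, p, hpnn, hpsum1, hKLp, hval⟩ :=
        exists_gibbs hk phat v hpos hp1 m hm_le hs θ hθ hcase
      have hgv : g lam = -lam * θ - lam * Real.log (∑ i, phat i * Real.exp (-v i / lam)) := by
        simp [g, hlam.ne']
      calc sInf P ≤ ∑ i, p i * v i := csInf_le hbddP ⟨p, ⟨hpnn, hpsum1⟩, hKLp, rfl⟩
        _ = g lam := by rw [hval, hgv]
        _ ≤ sSup D := le_csSup hbddD ⟨lam, hlam.le, rfl⟩
  · exact le_csInf hPne (fun x hx => csSup_le hDne (fun y hy => weak x hx y hy))
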